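/- The map S : G/(id − γ_*)(G) → G_0 induced by (x_n)_n ↦ Σ_{n∈Z} α^n(x_n) is a well-defined group isomorphism, with inverse sending a ∈ G_0 to the class of the sequence supported at n = 0 with value a. -/

import Mathlib

open scoped BigOperators

noncomputable section

/-- The open interval `(0,1)` on which the functions of `G₀ = ℤ[t,t⁻¹,(1-t)⁻¹]` live. -/
def I01 : Set ℝ := Set.Ioo 0 1

/-- Membership in `G₀ = ℤ[t,t⁻¹,(1-t)⁻¹]`, viewed as continuous functions on `(0,1)`:
`f ∈ G₀` iff `f(t) = p(t)/(tᵐ(1-t)ⁿ)` for some integer polynomial `p`. -/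
def memG0 (f : I01 → ℝ) : Prop :=
  ∃ (p : Polynomial ℤ) (m n : ℕ),
    ∀ t : I01, f t = (Polynomial.aeval (t : ℝ) p) / ((t : ℝ) ^ m * (1 - (t : ℝ)) ^ n)

/-- The positive cone `G_F⁺ = {f ∈ G₀ : f > 0 on F} ∪ {0}`. -/
def memGFp (F : Set ℝ) (f : I01 → ℝ) : Prop :=
  memG0 f ∧ ((∀ t : I01, (t : ℝ) ∈ F → 0 < f t) ∨ f = 0)

/-- Membership in `G = ⊕_{n ∈ ℤ} G₀` (finitely supported sequences of elements of `G₀`). -/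
def memG (x : ℤ → I01 → ℝ) : Prop :=
  (∀ n : ℤ, memG0 (x n)) ∧ {n : ℤ | x n ≠ 0}.Finite

/-- `Σ_{n ∈ ℤ} αⁿ(xₙ)(t)`, where `α` is multiplication by `t/(1-t)`. -/
def sumAlpha (x : ℤ → I01 → ℝ) (t : I01) : ℝ :=
  ∑ᶠ n : ℤ, ((t : ℝ) / (1 - (t : ℝ))) ^ n * x n t

/-- `Σ_{n ∈ ℤ} xₙ(t)`. -/
def sumPlain (x : ℤ → I01 → ℝ) (t : I01) : ℝ := ∑ᶠ n : ℤ, x n t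

/-- The automorphism `γ₊ : G → G`, `γ₊((xₙ)ₙ) = (α(x_{n+1}))ₙ`. -/
def gammaStar (x : ℤ → I01 → ℝ) : ℤ → I01 → ℝ :=
  fun n t => ((t : ℝ) / (1 - (t : ℝ))) * x (n + 1) t

/-- The positive cone `G⁺` of `G` determined by `F` and `F₁`. -/
def memGplus (F F1 : Set ℝ) (x : ℤ → I01 → ℝ) : Prop :=
  memG x ∧
    (((∀ t : I01, (t : ℝ) ∈ F → 0 < sumAlpha x t) ∧
      (∀ t : I01, (t : ℝ) ∈ F1 → 0 < sumPlain x t)) ∨ x = 0)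

/-- The cone `G⁺⁺ = {0} ∪ {x ∈ G : Σₙ αⁿ(xₙ) > 0 on F}`. -/
def memGpp (F : Set ℝ) (x : ℤ → I01 → ℝ) : Prop :=
  memG x ∧ ((∀ t : I01, (t : ℝ) ∈ F → 0 < sumAlpha x t) ∨ x = 0)

/-- The sequence in `G` supported at `n = 0` with value `a`. -/
def delta0 (a : I01 → ℝ) : ℤ → I01 → ℝ := fun n => if n = 0 then a else 0

/-! ### Auxiliary lemmas -/

lemma t_ne (t : I01) : (t:ℝ) ≠ 0 := ne_of_gt t.2.1

lemma one_sub_ne (t : I01) : (1 - (t:ℝ)) ≠ 0 := by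
  have h : (t:ℝ) < 1 := t.2.2; intro h2; linarith

lemma c_ne (t : I01) : (t:ℝ) / (1 - (t:ℝ)) ≠ 0 := div_ne_zero (t_ne t) (one_sub_ne t)

lemma memG0_zero : memG0 (fun _ => (0:ℝ)) := ⟨0, 0, 0, by simp⟩

lemma memG0_sub {f g : I01 → ℝ} (hf : memG0 f) (hg : memG0 g) :
    memG0 (fun t => f t - g t) := by
  obtain ⟨p, m, n, hp⟩ := hf
  obtain ⟨q, m', n', hq⟩ := hg
  refine ⟨p * Polynomial.X ^ m' * (1 - Polynomial.X) ^ n' -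
    q * Polynomial.X ^ m * (1 - Polynomial.X) ^ n, m + m', n + n', fun t => ?_⟩
  have h1 := t_ne t
  have h2 := one_sub_ne t
  beta_reduce
  rw [hp t, hq t]
  simp only [map_sub, map_mul, map_pow, map_one, Polynomial.aeval_X]
  field_simp
  ring

lemma memG0_add {f g : I01 → ℝ} (hf : memG0 f) (hg : memG0 g) :
    memG0 (fun t => f t + g t) := by
  obtain ⟨p, m, n, hp⟩ := hf
  obtain ⟨q, m', n', hq⟩ := hg
  refine ⟨p * Polynomial.X ^ m' * (1 - Polynomial.X) ^ n' +
    q * Polynomial.X ^ m * (1 - Polynomial.X) ^ n, m + m', n + n', fun t => ?_⟩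
  have h1 := t_ne t
  have h2 := one_sub_ne t
  beta_reduce
  rw [hp t, hq t]
  simp only [map_add, map_sub, map_mul, map_pow, map_one, Polynomial.aeval_X]
  field_simp
  ring

lemma memG0_cpow_mul (k : ℤ) {f : I01 → ℝ} (hf : memG0 f) :
    memG0 (fun t => ((t:ℝ) / (1 - (t:ℝ))) ^ k * f t) := by
  obtain ⟨p, m, n, hp⟩ := hf
  cases k with
  | ofNat j =>
    refine ⟨p * Polynomial.X ^ j, m, n + j, fun t => ?_⟩
    have h1 := t_ne t
    have h2 := one_sub_ne t
    beta_reduce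
    rw [hp t]
    simp only [Int.ofNat_eq_coe, zpow_natCast, map_mul, map_pow, Polynomial.aeval_X]
    rw [div_pow]
    field_simp
    ring
  | negSucc j =>
    refine ⟨p * (1 - Polynomial.X) ^ (j + 1), m + (j + 1), n, fun t => ?_⟩
    have h1 := t_ne t
    have h2 := one_sub_ne t
    beta_reduce
    rw [hp t]
    rw [zpow_negSucc]
    simp only [map_mul, map_sub, map_pow, map_one, Polynomial.aeval_X]
    rw [div_pow]
    field_simp
    ring

lemma memG0_finsetSum {ι : Type*} (s : Finset ι) (f : ι → I01 → ℝ)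
    (h : ∀ i ∈ s, memG0 (f i)) : memG0 (fun t => ∑ i ∈ s, f i t) := by
  classical
  induction s using Finset.cons_induction with
  | empty => simpa using memG0_zero
  | cons a s ha ih =>
    simp only [Finset.sum_cons]
    exact memG0_add (h a (Finset.mem_cons_self a s))
      (ih fun i hi => h i (Finset.mem_cons_of_mem hi))

lemma apply_ne_zero {x : ℤ → I01 → ℝ} {n : ℤ} {t : I01} (h : x n t ≠ 0) : x n ≠ 0 :=
  fun h0 => h (by rw [h0]; rfl)

lemma sumAlpha_eq (x : ℤ → I01 → ℝ) (s : Finset ℤ) (hs : ∀ n, x n ≠ 0 → n ∈ s) (t : I01) :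
    sumAlpha x t = ∑ n ∈ s, ((t : ℝ) / (1 - (t : ℝ))) ^ n * x n t := by
  apply finsum_eq_sum_of_support_subset
  intro n hn
  simp only [Function.mem_support] at hn
  have : x n t ≠ 0 := fun h => hn (by rw [h, mul_zero])
  exact hs n (apply_ne_zero this)

lemma sumAlpha_gammaStar (z : ℤ → I01 → ℝ) : sumAlpha (gammaStar z) = sumAlpha z := by
  funext t
  have hc := c_ne t
  unfold sumAlpha gammaStar
  have key : ∀ n : ℤ, ((t : ℝ) / (1 - (t : ℝ))) ^ n * (((t : ℝ) / (1 - (t : ℝ))) * z (n + 1) t)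
      = (fun m => ((t : ℝ) / (1 - (t : ℝ))) ^ m * z m t) ((Equiv.addRight (1:ℤ)) n) := by
    intro n
    simp only [Equiv.coe_addRight]
    rw [zpow_add_one₀ hc]
    ring
  rw [← finsum_comp_equiv (Equiv.addRight (1:ℤ))
    (f := fun m => ((t : ℝ) / (1 - (t : ℝ))) ^ m * z m t)]
  exact finsum_congr key

lemma memG_sub {x y : ℤ → I01 → ℝ} (hx : memG x) (hy : memG y) : memG (x - y) := by
  constructor
  · intro n
    exact memG0_sub (hx.1 n) (hy.1 n)
  · apply Set.Finite.subset (hx.2.union hy.2)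
    intro n hn
    simp only [Set.mem_setOf_eq, Set.mem_union] at hn ⊢
    by_contra h
    push_neg at h
    exact hn (by rw [Pi.sub_apply, h.1, h.2, sub_zero])

lemma sub_support_subset {x y : ℤ → I01 → ℝ} {s : Finset ℤ}
    (hx : ∀ n, x n ≠ 0 → n ∈ s) (hy : ∀ n, y n ≠ 0 → n ∈ s) :
    ∀ n, (x - y) n ≠ 0 → n ∈ s := by
  intro n hn
  by_contra h
  have h1 : x n = 0 := by by_contra h1; exact h (hx n h1)
  have h2 : y n = 0 := by by_contra h2; exact h (hy n h2)
  exact hn (by rw [Pi.sub_apply, h1, h2, sub_zero])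

lemma add_support_subset {x y : ℤ → I01 → ℝ} {s : Finset ℤ}
    (hx : ∀ n, x n ≠ 0 → n ∈ s) (hy : ∀ n, y n ≠ 0 → n ∈ s) :
    ∀ n, (x + y) n ≠ 0 → n ∈ s := by
  intro n hn
  by_contra h
  have h1 : x n = 0 := by by_contra h1; exact h (hx n h1)
  have h2 : y n = 0 := by by_contra h2; exact h (hy n h2)
  exact hn (by rw [Pi.add_apply, h1, h2, add_zero])

lemma sumAlpha_sub {x y : ℤ → I01 → ℝ} (hx : memG x) (hy : memG y) (t : I01) :
    sumAlpha (x - y) t = sumAlpha x t - sumAlpha y t := by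
  classical
  set s : Finset ℤ := hx.2.toFinset ∪ hy.2.toFinset with hs
  have hxs : ∀ n, x n ≠ 0 → n ∈ s := fun n hn =>
    Finset.mem_union_left _ (hx.2.mem_toFinset.2 hn)
  have hys : ∀ n, y n ≠ 0 → n ∈ s := fun n hn =>
    Finset.mem_union_right _ (hy.2.mem_toFinset.2 hn)
  rw [sumAlpha_eq x s hxs t, sumAlpha_eq y s hys t,
    sumAlpha_eq (x - y) s (sub_support_subset hxs hys) t, ← Finset.sum_sub_distrib]
  apply Finset.sum_congr rfl
  intro n _
  rw [Pi.sub_apply, Pi.sub_apply, mul_sub]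

lemma memG_gammaStar {z : ℤ → I01 → ℝ} (hz : memG z) : memG (gammaStar z) := by
  constructor
  · intro n
    have := memG0_cpow_mul 1 (hz.1 (n + 1))
    simp only [zpow_one] at this
    exact this
  · apply Set.Finite.subset (hz.2.image (fun m => m - 1))
    intro n hn
    simp only [Set.mem_setOf_eq] at hn
    have hne : z (n + 1) ≠ 0 := by
      intro h0
      apply hn
      funext t
      show ((t : ℝ) / (1 - (t : ℝ))) * z (n + 1) t = 0
      rw [h0]
      simp
    exact ⟨n + 1, hne, by ring⟩

/-- the map induced by `x ↦ Σₙ αⁿ(xₙ)` is a well-defined group isomorphism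
`S : G/(id - γ₊)(G) → G₀`, with inverse `a ↦ [delta0 a]`. -/
theorem stmt10 :
    (∀ x : ℤ → I01 → ℝ, memG x → memG0 (sumAlpha x)) ∧
    (∀ x y : ℤ → I01 → ℝ, memG x → memG y → sumAlpha (x + y) = sumAlpha x + sumAlpha y) ∧
    (∀ x y : ℤ → I01 → ℝ, memG x → memG y →
      (sumAlpha x = sumAlpha y ↔ ∃ z : ℤ → I01 → ℝ, memG z ∧ x - y = z - gammaStar z)) ∧
    (∀ a : I01 → ℝ, memG0 a → memG (delta0 a) ∧ sumAlpha (delta0 a) = a) := by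
  classical
  refine ⟨?_, ?_, ?_, ?_⟩
  -- Part 1 : well-defined into G₀
  · intro x hx
    have : sumAlpha x = fun t : I01 => ∑ n ∈ hx.2.toFinset,
        ((t : ℝ) / (1 - (t : ℝ))) ^ n * x n t := by
      funext t
      exact sumAlpha_eq x _ (fun n hn => hx.2.mem_toFinset.2 hn) t
    rw [this]
    exact memG0_finsetSum _ _ (fun n _ => memG0_cpow_mul n (hx.1 n))
  -- Part 2 : additivity
  · intro x y hx hy
    funext t
    set s : Finset ℤ := hx.2.toFinset ∪ hy.2.toFinset with hs
    have hxs : ∀ n, x n ≠ 0 → n ∈ s := fun n hn =>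
      Finset.mem_union_left _ (hx.2.mem_toFinset.2 hn)
    have hys : ∀ n, y n ≠ 0 → n ∈ s := fun n hn =>
      Finset.mem_union_right _ (hy.2.mem_toFinset.2 hn)
    rw [Pi.add_apply, sumAlpha_eq x s hxs t, sumAlpha_eq y s hys t,
      sumAlpha_eq (x + y) s (add_support_subset hxs hys) t, ← Finset.sum_add_distrib]
    apply Finset.sum_congr rfl
    intro n _
    simp only [Pi.add_apply, mul_add]
  -- Part 3 : injectivity / kernel identification
  · intro x y hx hy
    constructor
    · intro hxy
      set w : ℤ → I01 → ℝ := x - y with hwdef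
      have hw : memG w := memG_sub hx hy
      have hw0 : ∀ t : I01, sumAlpha w t = 0 := by
        intro t
        rw [hwdef, sumAlpha_sub hx hy t, hxy, sub_self]
      set s : Finset ℤ := insert 0 hw.2.toFinset with hsdef
      have hs0 : (0:ℤ) ∈ s := Finset.mem_insert_self 0 _
      set M : ℤ := s.max' ⟨0, hs0⟩ with hMdef
      set L : ℤ := s.min' ⟨0, hs0⟩ with hLdef
      have hbound : ∀ n, w n ≠ 0 → L ≤ n ∧ n ≤ M := by
        intro n hn
        have hns : n ∈ s := Finset.mem_insert_of_mem (hw.2.mem_toFinset.2 hn)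
        exact ⟨s.min'_le n hns, s.le_max' n hns⟩
      set z : ℤ → I01 → ℝ := fun n t =>
        ∑ k ∈ Finset.Icc n M, ((t : ℝ) / (1 - (t : ℝ))) ^ (k - n) * w k t with hzdef
      have hz_top : ∀ n, M < n → z n = 0 := by
        intro n hn
        funext t
        show ∑ k ∈ Finset.Icc n M, ((t : ℝ) / (1 - (t : ℝ))) ^ (k - n) * w k t = 0
        rw [Finset.Icc_eq_empty (by omega), Finset.sum_empty]
      have hz_bot : ∀ n, n < L → z n = 0 := by
        intro n hn
        funext t
        have hsum : sumAlpha w t = ∑ k ∈ Finset.Icc n M,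
            ((t : ℝ) / (1 - (t : ℝ))) ^ k * w k t := by
          apply sumAlpha_eq
          intro k hk
          have := hbound k hk
          exact Finset.mem_Icc.mpr ⟨by omega, this.2⟩
        show ∑ k ∈ Finset.Icc n M, ((t : ℝ) / (1 - (t : ℝ))) ^ (k - n) * w k t = 0
        have step : ∀ k ∈ Finset.Icc n M,
            ((t : ℝ) / (1 - (t : ℝ))) ^ (k - n) * w k t =
            (((t : ℝ) / (1 - (t : ℝ))) ^ k * w k t) / ((t : ℝ) / (1 - (t : ℝ))) ^ n := by
          intro k _
          rw [zpow_sub₀ (c_ne t)]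
          ring
        rw [Finset.sum_congr rfl step, ← Finset.sum_div, ← hsum, hw0 t, zero_div]
      have hzG : memG z := by
        constructor
        · intro n
          exact memG0_finsetSum _ _ (fun k _ => memG0_cpow_mul (k - n) (hw.1 k))
        · apply Set.Finite.subset (Set.finite_Icc L M)
          intro n hn
          simp only [Set.mem_setOf_eq] at hn
          by_contra h
          rw [Set.mem_Icc] at h
          push_neg at h
          rcases lt_or_ge n L with hcase | hcase
          · exact hn (hz_bot n hcase)
          · exact hn (hz_top n (h hcase))
      refine ⟨z, hzG, ?_⟩
      funext n t
      have hc := c_ne t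
      show w n t = z n t - gammaStar z n t
      have hgz : gammaStar z n t = ∑ k ∈ Finset.Icc (n + 1) M,
          ((t : ℝ) / (1 - (t : ℝ))) ^ (k - n) * w k t := by
        show ((t : ℝ) / (1 - (t : ℝ))) * z (n + 1) t = _
        show ((t : ℝ) / (1 - (t : ℝ))) *
          (∑ k ∈ Finset.Icc (n + 1) M,
            ((t : ℝ) / (1 - (t : ℝ))) ^ (k - (n + 1)) * w k t) = _
        rw [Finset.mul_sum]
        apply Finset.sum_congr rfl
        intro k _
        have : ((t : ℝ) / (1 - (t : ℝ))) ^ (k - n) =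
            ((t : ℝ) / (1 - (t : ℝ))) * ((t : ℝ) / (1 - (t : ℝ))) ^ (k - (n + 1)) := by
          rw [mul_comm, ← zpow_add_one₀ hc]
          congr 1
          omega
        rw [this]
        ring
      rw [hgz]
      have hzn : z n t = ∑ k ∈ Finset.Icc n M,
          ((t : ℝ) / (1 - (t : ℝ))) ^ (k - n) * w k t := rfl
      rw [hzn]
      rcases le_or_gt n M with hcase | hcase
      · have hins : Finset.Icc n M = insert n (Finset.Icc (n + 1) M) := by
          ext k
          simp only [Finset.mem_Icc, Finset.mem_insert]
          omega
        rw [hins, Finset.sum_insert (by simp only [Finset.mem_Icc]; omega)]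
        rw [sub_self, zpow_zero, one_mul, add_sub_cancel_right]
      · have h1 : Finset.Icc n M = ∅ := Finset.Icc_eq_empty (by omega)
        have h2 : Finset.Icc (n + 1) M = ∅ := Finset.Icc_eq_empty (by omega)
        have hwn : w n = 0 := by
          by_contra hwn
          exact absurd (hbound n hwn).2 (by omega)
        rw [h1, h2]
        simp [hwn]
    · rintro ⟨z, hz, heq⟩
      funext t
      have hgz : memG (gammaStar z) := memG_gammaStar hz
      have h1 : sumAlpha (x - y) t = sumAlpha x t - sumAlpha y t := sumAlpha_sub hx hy t
      have h2 : sumAlpha (z - gammaStar z) t = sumAlpha z t - sumAlpha (gammaStar z) t :=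
        sumAlpha_sub hz hgz t
      rw [heq] at h1
      rw [h2, sumAlpha_gammaStar, sub_self] at h1
      linarith [h1.symm]
  -- Part 4 : the inverse map
  · intro a ha
    have hmem : memG (delta0 a) := by
      constructor
      · intro n
        by_cases hn : n = 0
        · subst hn
          simpa [delta0] using ha
        · have : delta0 a n = 0 := by simp [delta0, hn]
          rw [this]
          exact memG0_zero
      · apply Set.Finite.subset (Set.finite_singleton (0:ℤ))
        intro n hn
        simp only [Set.mem_setOf_eq, delta0] at hn
        simp only [Set.mem_singleton_iff]
        by_contra h
        rw [if_neg h] at hn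
        exact hn rfl
    refine ⟨hmem, ?_⟩
    funext t
    have hsupp : ∀ n : ℤ, delta0 a n ≠ 0 → n ∈ ({0} : Finset ℤ) := by
      intro n hn
      by_contra h
      simp only [Finset.mem_singleton] at h
      exact hn (by simp [delta0, h])
    rw [sumAlpha_eq (delta0 a) {0} hsupp t, Finset.sum_singleton, zpow_zero, one_mul]
    simp [delta0]

end
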